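/- If 0 < α < −β − 1, then for every integer ℓ with 0 ≤ ℓ ≤ K, where K is the largest positive integer such that K(−a − b − c) ≤ −b − 1, the vector −ℓ·(a + c, c)ᵀ is a periodic point of Φ; in particular, the attractor 𝒜_Φ contains {(0,0)ᵀ, −(a + c, c)ᵀ, …, −K(a + c, c)ᵀ}. -/

import Mathlib

open Matrix Polynomial

noncomputable section

/-- `ℤ²[A]`: the smallest `A`-invariant `ℤ`-module containing `ℤ²`. -/
def intSpan {n : ℕ} (A : Matrix (Fin n) (Fin n) ℚ) : Set (Fin n → ℚ) :=
  {x | ∃ (k : ℕ) (v : ℕ → Fin n → ℤ),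
    x = ∑ j ∈ Finset.range (k + 1), (A ^ j).mulVec (fun i => ((v j i : ℚ)))}

/-- The digit vector `(ν, 0)ᵀ`. -/
def digitVec (ν : ℤ) : Fin 2 → ℚ := ![(ν : ℚ), 0]

/-- Newton–Hensel lifting of the root `0 mod p^t` of `X² + aX + bc`. -/
lemma auxHensel (p a bc : ℤ) (hp : Prime p) (hpa : ¬ p ∣ a) (t : ℕ) (ht : 1 ≤ t)
    (hbc : p ^ t ∣ bc) :
    ∀ N : ℕ, ∃ lam : ℤ, p ^ t ∣ lam ∧ p ^ (t + N) ∣ lam ^ 2 + a * lam + bc := by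
  intro N
  induction N with
  | zero => exact ⟨0, dvd_zero _, by simpa using hbc⟩
  | succ N ih =>
    obtain ⟨lam, hlam, hf⟩ := ih
    have hpl : p ∣ lam := dvd_trans (dvd_pow_self p (by omega)) hlam
    have hpd : ¬ p ∣ (2 * lam + a) := by
      intro h
      exact hpa (by
        have : p ∣ (2 * lam + a) - 2 * lam := dvd_sub h (Dvd.dvd.mul_left hpl 2)
        simpa using this)
    obtain ⟨u, v, huv⟩ := (hp.coprime_iff_not_dvd.mpr hpd)
    set F := lam ^ 2 + a * lam + bc with hF
    have hftF : p ^ t ∣ F := dvd_trans (pow_dvd_pow p (by omega)) hf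
    refine ⟨lam + (-F * v), ?_, ?_⟩
    · exact dvd_add hlam ((dvd_neg.mpr hftF).mul_right v)
    · have key : (lam + (-F * v)) ^ 2 + a * (lam + (-F * v)) + bc
          = F * (u * p) + (F * v) ^ 2 := by
        linear_combination (-F) * huv
      rw [key]
      refine dvd_add ?_ ?_
      · rw [show t + (N+1) = (t+N)+1 from rfl, pow_succ]
        exact mul_dvd_mul hf (dvd_mul_left p u)
      · calc p ^ (t + (N+1)) ∣ p ^ (2 * (t + N)) := pow_dvd_pow p (by omega)
          _ = (p ^ (t+N)) ^ 2 := by rw [← pow_mul, mul_comm]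
          _ ∣ (F) ^ 2 := pow_dvd_pow_of_dvd hf 2
          _ ∣ (F * v) ^ 2 := pow_dvd_pow_of_dvd (dvd_mul_right F v) 2

/-- Left-eigenvector congruence for powers of `B = !![0,-b;c,-a]`. -/
lemma auxPowCong (a b c lam : ℤ) (N : ℕ) (p : ℤ)
    (hf : p ^ N ∣ lam ^ 2 + a * lam + b * c) :
    ∀ (j : ℕ) (x : Fin 2 → ℤ),
      p ^ N ∣ (c * ((!![0,-b;c,-a] ^ j).mulVec x) 0 + lam * ((!![0,-b;c,-a] ^ j).mulVec x) 1)
        - lam ^ j * (c * x 0 + lam * x 1) := by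
  intro j
  induction j with
  | zero => intro x; simp [Matrix.one_mulVec]
  | succ j ih =>
    intro x
    set B : Matrix (Fin 2) (Fin 2) ℤ := !![0,-b;c,-a] with hB
    have hstep : (B ^ (j+1)).mulVec x = (B ^ j).mulVec (B.mulVec x) := by
      rw [Matrix.mulVec_mulVec, ← pow_succ]
    have h0 : (B.mulVec x) 0 = -b * x 1 := by
      simp [hB, Matrix.mulVec, dotProduct, Fin.sum_univ_two]
    have h1 : (B.mulVec x) 1 = c * x 0 - a * x 1 := by
      simp [hB, Matrix.mulVec, dotProduct, Fin.sum_univ_two]; ring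
    have hIH := ih (B.mulVec x)
    rw [hstep]
    have hf2 : p ^ N ∣ lam ^ j * (-(x 1) * (lam ^ 2 + a * lam + b * c)) :=
      Dvd.dvd.mul_left (Dvd.dvd.mul_left hf (-(x 1))) (lam ^ j)
    have := dvd_add hIH hf2
    convert (show p ^ N ∣ _ from this) using 1
    rw [h0, h1]
    ring

/-- Scaled powers of the rational companion matrix are integral. -/
lemma auxCastPow (α β : ℚ) (a b c : ℤ) (ha : (a : ℚ) = (c : ℚ) * α)
    (hb : (b : ℚ) = (c : ℚ) * β) :
    ∀ (j : ℕ) (x : Fin 2 → ℤ),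
      (c : ℚ) ^ j • (!![0,-β;1,-α] ^ j).mulVec (fun i => ((x i : ℚ)))
        = fun i => (((!![0,-b;c,-a] ^ j).mulVec x i : ℤ) : ℚ) := by
  have base : ∀ y : Fin 2 → ℤ,
      (c : ℚ) • (!![0,-β;1,-α]).mulVec (fun i => ((y i : ℚ)))
        = fun i => ((((!![0,-b;c,-a]).mulVec y) i : ℤ) : ℚ) := by
    intro y
    funext i
    fin_cases i <;>
      simp [Matrix.mulVec, dotProduct, Fin.sum_univ_two] <;> push_cast <;>
      [linear_combination (-(y 1 : ℚ)) * hb; linear_combination ((y 1 : ℚ)) * ha]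
  intro j
  induction j with
  | zero => intro x; simp [Matrix.one_mulVec]
  | succ j ih =>
    intro x
    have hstep : (!![0,-β;1,-α] ^ (j+1)).mulVec (fun i => ((x i : ℚ)))
        = (!![0,-β;1,-α]).mulVec ((!![0,-β;1,-α] ^ j).mulVec (fun i => ((x i : ℚ)))) := by
      rw [Matrix.mulVec_mulVec, ← pow_succ']
    rw [hstep, pow_succ, mul_comm ((c:ℚ)^j) (c:ℚ), mul_smul,
      ← Matrix.mulVec_smul, ih x, base]
    have : (!![0,-b;c,-a] ^ (j+1)).mulVec x
        = (!![0,-b;c,-a]).mulVec ((!![0,-b;c,-a] ^ j).mulVec x) := by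
      rw [Matrix.mulVec_mulVec, ← pow_succ']
    rw [this]

/-- Representations in `intSpan` can be padded to any larger length. -/
lemma auxPad (A : Matrix (Fin 2) (Fin 2) ℚ) (x : Fin 2 → ℚ) (k k' : ℕ) (hk : k ≤ k')
    (v : ℕ → Fin 2 → ℤ)
    (h : x = ∑ j ∈ Finset.range (k + 1), (A ^ j).mulVec (fun i => ((v j i : ℚ)))) :
    ∃ v' : ℕ → Fin 2 → ℤ,
      x = ∑ j ∈ Finset.range (k' + 1), (A ^ j).mulVec (fun i => ((v' j i : ℚ))) := by
  refine ⟨fun j => if j ≤ k then v j else 0, ?_⟩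
  rw [h]
  have hsub : Finset.range (k+1) ⊆ Finset.range (k'+1) := by
    intro j hj; simp only [Finset.mem_range] at *; omega
  have hagree : ∑ j ∈ Finset.range (k + 1), (A ^ j).mulVec (fun i => ((v j i : ℚ)))
      = ∑ j ∈ Finset.range (k + 1),
        (A ^ j).mulVec (fun i => (((if j ≤ k then v j else 0) i : ℤ) : ℚ)) := by
    apply Finset.sum_congr rfl
    intro j hj
    simp only [Finset.mem_range] at hj
    rw [if_pos (show j ≤ k by omega)]
  rw [hagree]
  apply Finset.sum_subset hsub
  intro j hj hnj
  simp only [Finset.mem_range] at hj hnj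
  have hjk : ¬ j ≤ k := by omega
  simp only [hjk, if_false]
  have hz : (fun i => (((0 : Fin 2 → ℤ) i : ℤ) : ℚ)) = (0 : Fin 2 → ℚ) := by
    funext i; simp
  rw [hz, Matrix.mulVec_zero]

/-- `intSpan` is closed under subtraction. -/
lemma auxSub (A : Matrix (Fin 2) (Fin 2) ℚ) (x y : Fin 2 → ℚ)
    (hx : x ∈ intSpan A) (hy : y ∈ intSpan A) : x - y ∈ intSpan A := by
  obtain ⟨k1, v1, h1⟩ := hx
  obtain ⟨k2, v2, h2⟩ := hy
  obtain ⟨w1, h1'⟩ := auxPad A x k1 (max k1 k2) (le_max_left _ _) v1 h1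
  obtain ⟨w2, h2'⟩ := auxPad A y k2 (max k1 k2) (le_max_right _ _) v2 h2
  refine ⟨max k1 k2, fun j => w1 j - w2 j, ?_⟩
  rw [h1', h2', ← Finset.sum_sub_distrib]
  apply Finset.sum_congr rfl
  intro j _
  have hv : (fun i => (((w1 j - w2 j) i : ℤ) : ℚ))
      = ((fun i => ((w1 j i : ℚ))) - fun i => ((w2 j i : ℚ))) := by
    funext i
    simp [Pi.sub_apply]
  simp only [hv, Matrix.mulVec_sub]

/-- The key divisibility: if `A z` is a digit vector for some `z ∈ ℤ²[A]`,
then the digit is divisible by `b`. -/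
lemma auxKeyDvd (α β : ℚ) (a b c : ℤ) (hc : 0 < c)
    (ha : (a : ℚ) = (c : ℚ) * α) (hb : (b : ℚ) = (c : ℚ) * β)
    (hprim : Int.gcd c (Int.gcd a b) = 1)
    (z : Fin 2 → ℚ) (hz : z ∈ intSpan !![0,-β;1,-α])
    (μ : ℤ) (hμ : (!![0,-β;1,-α]).mulVec z = digitVec μ) : b ∣ μ := by
  obtain ⟨k, v, hrep⟩ := hz
  set B : Matrix (Fin 2) (Fin 2) ℤ := !![0,-b;c,-a] with hBdef
  set W : Fin 2 → ℤ := fun i => ∑ j ∈ Finset.range (k+1),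
    c ^ (k - j) * ((B ^ j).mulVec (v j)) i with hW
  have hc0 : c ≠ 0 := ne_of_gt hc
  -- components of the defining equation
  have e0 : -(β * z 1) = (μ : ℚ) := by
    have := congrFun hμ 0
    simpa [Matrix.mulVec, dotProduct, Fin.sum_univ_two, digitVec] using this
  have e1 : z 0 - α * z 1 = 0 := by
    have := congrFun hμ 1
    simp [Matrix.mulVec, dotProduct, Fin.sum_univ_two, digitVec] at this
    linarith [this]
  -- the integral vector W equals c^k • z
  have castW : ∀ i, ((W i : ℤ) : ℚ) = (c : ℚ) ^ k * z i := by
    intro i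
    have hterm : ∀ j ∈ Finset.range (k+1),
        ((c : ℚ)) ^ (k - j) * ((((B ^ j).mulVec (v j)) i : ℤ) : ℚ)
          = (c : ℚ) ^ k * ((!![0,-β;1,-α] ^ j).mulVec (fun i => ((v j i : ℚ))) i) := by
      intro j hj
      simp only [Finset.mem_range] at hj
      have hcp := congrFun (auxCastPow α β a b c ha hb j (v j)) i
      simp only [Pi.smul_apply, smul_eq_mul] at hcp
      rw [← hcp, ← mul_assoc, ← pow_add, Nat.sub_add_cancel (by omega : j ≤ k)]
    have hWc : ((W i : ℤ) : ℚ) = ∑ j ∈ Finset.range (k+1),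
        ((c : ℚ)) ^ (k - j) * ((((B ^ j).mulVec (v j)) i : ℤ) : ℚ) := by
      simp only [hW]
      push_cast
      rfl
    rw [hWc, Finset.sum_congr rfl hterm, ← Finset.mul_sum]
    congr 1
    rw [hrep]
    rw [Finset.sum_apply]
  -- the two integer relations
  have h1 : b * W 1 = -(c ^ (k + 1) * μ) := by
    have q1 : ((b * W 1 : ℤ) : ℚ) = ((-(c ^ (k + 1) * μ) : ℤ) : ℚ) := by
      push_cast
      rw [castW 1]
      linear_combination ((c:ℚ)^k * z 1) * hb - (c:ℚ)^(k+1) * e0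
    exact_mod_cast q1
  have h2 : c * W 0 = a * W 1 := by
    have q2 : ((c * W 0 : ℤ) : ℚ) = ((a * W 1 : ℤ) : ℚ) := by
      push_cast
      rw [castW 0, castW 1]
      linear_combination (-(c:ℚ)^k * z 1) * ha + (c:ℚ)^(k+1) * e1
    exact_mod_cast q2
  -- now pure number theory
  rw [← Int.natAbs_dvd_natAbs]
  rw [Nat.dvd_iff_prime_pow_dvd_dvd]
  intro p n hp hpb
  -- move to ℤ
  have hpZ : Prime (p : ℤ) := Nat.prime_iff_prime_int.mp hp
  have hpbZ : (p : ℤ) ^ n ∣ b := by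
    have h' : ((p ^ n : ℕ) : ℤ) ∣ b := Int.natCast_dvd.mpr hpb
    push_cast at h'
    exact h'
  suffices hgoal : (p : ℤ) ^ n ∣ μ by
    have h' : ((p ^ n : ℕ) : ℤ) ∣ μ := by push_cast; exact hgoal
    exact Int.natCast_dvd.mp h'
  by_cases hpc : (p : ℤ) ∣ c
  · -- hard case: p divides both b and c, hence not a
    rcases Nat.eq_zero_or_pos n with hn | hn
    · simp [hn]
    have hpb1 : (p : ℤ) ∣ b := dvd_trans (dvd_pow_self _ (by omega)) hpbZ
    have hpa : ¬ (p : ℤ) ∣ a := by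
      intro hA
      have h1' : p ∣ a.natAbs := Int.natCast_dvd_natCast.mp (Int.dvd_natAbs.mpr hA)
      have h2' : p ∣ b.natAbs := Int.natCast_dvd_natCast.mp (Int.dvd_natAbs.mpr hpb1)
      have h3' : p ∣ c.natAbs := Int.natCast_dvd_natCast.mp (Int.dvd_natAbs.mpr hpc)
      have h4' : p ∣ Int.gcd a b := Nat.dvd_gcd h1' h2'
      have h5' : p ∣ Int.gcd c (Int.gcd a b) := by
        apply Nat.dvd_gcd h3'
        simpa using h4'
      rw [hprim] at h5'
      exact hp.one_lt.ne' (Nat.dvd_one.mp h5')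
    have hpcN : p ∣ c.natAbs := Int.natCast_dvd.mp hpc
    have hcN0 : c.natAbs ≠ 0 := Int.natAbs_ne_zero.mpr hc0
    set t : ℕ := c.natAbs.factorization p with htdef
    have ht1 : 1 ≤ t := hp.factorization_pos_of_dvd hcN0 hpcN
    have hdvdt : (p : ℤ) ^ t ∣ c := by
      have h' : ((p ^ t : ℕ) : ℤ) ∣ c := Int.natCast_dvd.mpr (Nat.ordProj_dvd c.natAbs p)
      push_cast at h'
      exact h'
    set m : ℤ := c / (p : ℤ) ^ t with hmdef
    have hcm : c = (p : ℤ) ^ t * m := (Int.mul_ediv_cancel' hdvdt).symm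
    have hpm : ¬ (p : ℤ) ∣ m := by
      intro hdm
      have hsucc : (p : ℤ) ^ (t + 1) ∣ c := by
        rw [hcm, pow_succ]
        exact mul_dvd_mul_left _ hdm
      have hsucc' : ((p ^ (t+1) : ℕ) : ℤ) ∣ c := by push_cast; exact hsucc
      exact Nat.pow_succ_factorization_not_dvd hcN0 hp (Int.natCast_dvd.mp hsucc')
    obtain ⟨lam, hlam, hflam⟩ :=
      auxHensel (p : ℤ) a (b * c) hpZ hpa t ht1 (hdvdt.mul_left b) (k * t)
    set E : ℕ := t + k * t with hEdef
    have hsumdvd : (p : ℤ) ^ E ∣ (c * W 0 + lam * W 1)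
        - ∑ j ∈ Finset.range (k+1), c ^ (k-j) * lam ^ j * (c * v j 0 + lam * v j 1) := by
      have hrewrite : (c * W 0 + lam * W 1)
          - ∑ j ∈ Finset.range (k+1), c ^ (k-j) * lam ^ j * (c * v j 0 + lam * v j 1)
          = ∑ j ∈ Finset.range (k+1), c ^ (k-j) *
            ((c * ((B ^ j).mulVec (v j)) 0 + lam * ((B ^ j).mulVec (v j)) 1)
              - lam ^ j * (c * v j 0 + lam * v j 1)) := by
        simp only [hW, Finset.mul_sum, ← Finset.sum_add_distrib, ← Finset.sum_sub_distrib]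
        apply Finset.sum_congr rfl
        intro j _
        ring
      rw [hrewrite]
      exact Finset.dvd_sum fun j _ =>
        Dvd.dvd.mul_left (auxPowCong a b c lam E (p : ℤ) hflam j (v j)) _
    have htermdvd : (p : ℤ) ^ E ∣
        ∑ j ∈ Finset.range (k+1), c ^ (k-j) * lam ^ j * (c * v j 0 + lam * v j 1) := by
      apply Finset.dvd_sum
      intro j hj
      simp only [Finset.mem_range] at hj
      have h9 : t * (k - j) + t * j = t * k := by
        rw [← Nat.mul_add, Nat.sub_add_cancel (by omega : j ≤ k)]
      have hE : E = (t * (k - j) + t * j) + t := by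
        rw [h9]
        simp only [hEdef]
        ring
      rw [hE, pow_add, pow_add]
      refine mul_dvd_mul (mul_dvd_mul ?_ ?_) ?_
      · rw [pow_mul]; exact pow_dvd_pow_of_dvd hdvdt _
      · rw [pow_mul]; exact pow_dvd_pow_of_dvd hlam _
      · exact dvd_add (hdvdt.mul_right _) (hlam.mul_right _)
    have hW1sum : (p : ℤ) ^ E ∣ c * W 0 + lam * W 1 := by
      have := dvd_add hsumdvd htermdvd
      simpa using this
    have halam : c * W 0 + lam * W 1 = (a + lam) * W 1 := by rw [h2]; ring
    have hpal : ¬ (p : ℤ) ∣ (a + lam) := by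
      intro h
      apply hpa
      have hplam : (p : ℤ) ∣ lam := dvd_trans (dvd_pow_self _ (by omega)) hlam
      have := dvd_sub h hplam
      simpa using this
    have hW1 : (p : ℤ) ^ E ∣ W 1 := by
      have hcop : IsCoprime ((p : ℤ) ^ E) (a + lam) :=
        (hpZ.coprime_iff_not_dvd.mpr hpal).pow_left
      exact hcop.dvd_of_dvd_mul_left (halam ▸ hW1sum)
    have hE3 : t * (k + 1) = E := by simp only [hEdef]; ring
    have hE2 : (p : ℤ) ^ E * m ^ (k+1) = c ^ (k+1) := by
      rw [hcm, mul_pow, ← pow_mul, hE3]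
    have hprod : (p : ℤ) ^ E * (p : ℤ) ^ n ∣ (p : ℤ) ^ E * (m ^ (k+1) * μ) := by
      have h7 : (p : ℤ) ^ E * (m ^ (k+1) * μ) = -(b * W 1) := by
        rw [h1, neg_neg, ← hE2]
        ring
      have h8 : (p : ℤ) ^ n * (p : ℤ) ^ E ∣ b * W 1 := mul_dvd_mul hpbZ hW1
      rw [h7, mul_comm ((p : ℤ) ^ E) ((p : ℤ) ^ n)]
      exact dvd_neg.mpr h8
    have hfin : (p : ℤ) ^ n ∣ m ^ (k+1) * μ :=
      (mul_dvd_mul_iff_left (pow_ne_zero E hpZ.ne_zero)).mp hprod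
    have hcopm : IsCoprime ((p : ℤ) ^ n) (m ^ (k+1)) :=
      (hpZ.coprime_iff_not_dvd.mpr hpm).pow
    exact hcopm.dvd_of_dvd_mul_left hfin
  · -- easy case
    have hd : (p : ℤ) ^ n ∣ c ^ (k+1) * μ := by
      have : b ∣ c ^ (k+1) * μ := by
        refine ⟨-W 1, ?_⟩
        linarith [h1]
      exact dvd_trans hpbZ this
    have hcop : IsCoprime ((p : ℤ) ^ n) (c ^ (k+1)) :=
      ((hpZ.coprime_iff_not_dvd.mpr hpc).pow : IsCoprime _ _)
    exact hcop.dvd_of_dvd_mul_left hd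

theorem stmt7 (α β : ℚ) (hα1 : 0 < α) (hα2 : α < -β - 1)
    (hirr : Irreducible (X ^ 2 + C α * X + C β : ℚ[X]))
    (hexp : ∀ z : ℂ, z ^ 2 + (α : ℂ) * z + (β : ℂ) = 0 → 1 < ‖z‖)
    (c a b : ℤ) (hc : 0 < c)
    (ha : (a : ℚ) = (c : ℚ) * α) (hb : (b : ℚ) = (c : ℚ) * β)
    (hprim : Int.gcd c (Int.gcd a b) = 1)
    (A : Matrix (Fin 2) (Fin 2) ℚ) (hA : A = !![0, -β; 1, -α])
    (Φ : (Fin 2 → ℚ) → Fin 2 → ℚ)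
    (hΦmem : ∀ x ∈ intSpan A, Φ x ∈ intSpan A)
    (hΦ : ∀ x ∈ intSpan A, ∃ ν : ℤ, 0 ≤ ν ∧ ν ≤ |b| - 1 ∧
      x = digitVec ν + A.mulVec (Φ x))
    (K : ℤ) (hK1 : 1 ≤ K) (hK2 : K * (-a - b - c) ≤ -b - 1)
    (hKmax : ∀ K' : ℤ, 1 ≤ K' → K' * (-a - b - c) ≤ -b - 1 → K' ≤ K) :
    ∀ ℓ : ℤ, 0 ≤ ℓ → ℓ ≤ K →
      (![((-(ℓ * (a + c)) : ℤ) : ℚ), ((-(ℓ * c) : ℤ) : ℚ)] ∈ intSpan A ∧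
        ∃ r : ℕ, 1 ≤ r ∧
          Φ^[r] ![((-(ℓ * (a + c)) : ℤ) : ℚ), ((-(ℓ * c) : ℤ) : ℚ)] =
            ![((-(ℓ * (a + c)) : ℤ) : ℚ), ((-(ℓ * c) : ℤ) : ℚ)]) := by
  subst hA
  intro ℓ hℓ0 hℓK
  -- basic sign facts
  have hcQ : (0 : ℚ) < (c : ℚ) := by exact_mod_cast hc
  have hβ : β < 0 := by nlinarith
  have hbneg : b < 0 := by
    have : (b : ℚ) < 0 := by rw [hb]; nlinarith
    exact_mod_cast this
  have habc : a + b + c < 0 := by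
    have : ((a + b + c : ℤ) : ℚ) < 0 := by push_cast; rw [ha, hb]; nlinarith
    exact_mod_cast this
  have habs : |b| = -b := abs_of_neg hbneg
  set X : Fin 2 → ℚ := ![((-(ℓ * (a + c)) : ℤ) : ℚ), ((-(ℓ * c) : ℤ) : ℚ)] with hX
  -- membership
  have hmem : X ∈ intSpan !![0, -β; 1, -α] := by
    refine ⟨0, fun _ => ![-(ℓ * (a + c)), -(ℓ * c)], ?_⟩
    rw [Finset.sum_range_one, pow_zero, Matrix.one_mulVec]
    funext i
    fin_cases i <;> simp [hX]
  refine ⟨hmem, 1, le_refl 1, ?_⟩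
  rw [Function.iterate_one]
  -- the fixed-point digit
  set ν : ℤ := ℓ * (-a - b - c) with hν
  have hfix : X = digitVec ν + (!![0, -β; 1, -α]).mulVec X := by
    funext i
    fin_cases i <;>
      simp [hX, digitVec, Matrix.mulVec, dotProduct, Fin.sum_univ_two, hν] <;>
      push_cast <;>
      [linear_combination ((ℓ : ℚ)) * hb; linear_combination ((ℓ : ℚ)) * ha]
  obtain ⟨ν', hν'0, hν'1, heq⟩ := hΦ X hmem
  have hymem := hΦmem X hmem
  -- the difference satisfies the digit equation
  have h5 : (!![0, -β; 1, -α]).mulVec (Φ X - X) = digitVec (ν - ν') := by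
    rw [Matrix.mulVec_sub]
    have e1 : (!![0, -β; 1, -α]).mulVec (Φ X) = X - digitVec ν' := by
      rw [eq_sub_iff_add_eq, add_comm]
      exact heq.symm
    have e2 : (!![0, -β; 1, -α]).mulVec X = X - digitVec ν := by
      rw [eq_sub_iff_add_eq, add_comm]
      exact hfix.symm
    rw [e1, e2]
    funext i
    fin_cases i <;> simp [digitVec] <;> push_cast <;> ring
  have hzmem : Φ X - X ∈ intSpan !![0, -β; 1, -α] := auxSub _ _ _ hymem hmem
  have hdvd : b ∣ (ν - ν') :=
    auxKeyDvd α β a b c hc ha hb hprim (Φ X - X) hzmem (ν - ν') h5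
  -- bounds on ν
  have hν0 : 0 ≤ ν := mul_nonneg hℓ0 (by omega)
  have hν1 : ν ≤ |b| - 1 := by
    have h6 : ν ≤ K * (-a - b - c) :=
      mul_le_mul_of_nonneg_right hℓK (by omega)
    omega
  have hzero : ν - ν' = 0 := by
    apply Int.eq_zero_of_abs_lt_dvd ((neg_dvd).mpr hdvd)
    rw [abs_lt]
    constructor <;> omega
  have hνν : ν = ν' := by omega
  -- conclude Φ X = X
  have h7 : (!![0, -β; 1, -α]).mulVec (Φ X - X) = 0 := by
    rw [h5, hzero]
    funext i
    fin_cases i <;> simp [digitVec]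
  have hw1 : (Φ X - X) 1 = 0 := by
    have := congrFun h7 0
    simp [Matrix.mulVec, dotProduct, Fin.sum_univ_two] at this
    rcases this with h | h
    · exact absurd h (ne_of_lt hβ)
    · exact h
  have hw0 : (Φ X - X) 0 = 0 := by
    have h8 := congrFun h7 1
    simp [Matrix.mulVec, dotProduct, Fin.sum_univ_two] at h8
    have hw1' : Φ X 1 - X 1 = 0 := by simpa [Pi.sub_apply] using hw1
    rw [hw1'] at h8
    simp only [Pi.sub_apply]
    linarith [h8]
  have : Φ X - X = 0 := by
    funext i
    fin_cases i
    · exact hw0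
    · exact hw1
  have := sub_eq_zero.mp this
  exact this
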